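/- Let λ be a partition inside an n×k rectangle and let λ̄ be its complement in the rectangle, i.e., λ̄_i = k - λ_{n+1-i}. Then det[ C(k+i, j+λ_{n-j}) ]_{i,j=0}^{n-1} = det[ C(k+i, j+λ̄_{n-j}) ]_{i,j=0}^{n-1}, where C denotes the binomial coefficient. -/

import Mathlib

open Finset


private def gch (k : ℕ) (z : ℤ) : ℤ := if 0 ≤ z then (k.choose z.toNat : ℤ) else 0

private lemma gch_symm (k : ℕ) (z : ℤ) : gch k z = gch k ((k:ℤ) - z) := by
  unfold gch
  by_cases h1 : 0 ≤ z
  · by_cases h2 : 0 ≤ (k:ℤ) - z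
    · rw [if_pos h1, if_pos h2]
      have hz : z.toNat ≤ k := by omega
      have h3 : ((k:ℤ) - z).toNat = k - z.toNat := by omega
      rw [h3, Nat.choose_symm hz]
    · rw [if_pos h1, if_neg h2]
      have : k < z.toNat := by omega
      simp [Nat.choose_eq_zero_of_lt this]
  · rw [if_neg h1, if_pos (by omega)]
    have : k < ((k:ℤ) - z).toNat := by omega
    simp [Nat.choose_eq_zero_of_lt this]

private lemma alt_sum (m : ℕ) :
    ∑ u ∈ range (m+1), (-1:ℤ)^(m-u) * (m.choose u) = if m = 0 then 1 else 0 := by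
  have h := Finset.sum_range_reflect (fun u => (-1:ℤ)^u * (m.choose u)) (m+1)
  rw [← Int.alternating_sum_range_choose, ← h]
  refine Finset.sum_congr rfl fun u hu => ?_
  simp only [mem_range] at hu
  have e1 : m + 1 - 1 - u = m - u := by omega
  rw [e1]
  congr 1
  exact_mod_cast (congrArg (Nat.cast (R := ℤ)) (Nat.choose_symm (by omega : u ≤ m))).symm

private lemma delta_sum (i t : ℕ) :
    ∑ r ∈ range (i+1), (-1:ℤ)^(i-r) * (i.choose r) * (r.choose t)
      = if t = i then 1 else 0 := by
  by_cases hti : t ≤ i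
  · have hstep : ∑ r ∈ range (i+1), (-1:ℤ)^(i-r) * (i.choose r) * (r.choose t)
        = ∑ r ∈ Ico t (i+1), (-1:ℤ)^(i-r) * (i.choose r) * (r.choose t) := by
      refine (Finset.sum_subset (fun r hr => ?_) (fun r hr hr' => ?_)).symm
      · simp only [mem_range, mem_Ico] at *; omega
      simp only [mem_range, mem_Ico] at hr hr'
      have : r < t := by omega
      simp [Nat.choose_eq_zero_of_lt this]
    rw [hstep, Finset.sum_Ico_eq_sum_range]
    have hm : i + 1 - t = (i - t) + 1 := by omega
    rw [hm]
    have hterm : ∀ u ∈ range (i - t + 1),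
        (-1:ℤ)^(i-(t+u)) * (i.choose (t+u)) * ((t+u).choose t)
          = (i.choose t : ℤ) * ((-1:ℤ)^((i-t)-u) * ((i-t).choose u)) := by
      intro u hu
      simp only [mem_range] at hu
      have h1 : t + u ≤ i := by omega
      have h2 : t ≤ t + u := by omega
      have hc := Nat.choose_mul (n := i) h2
      simp only [Nat.add_sub_cancel_left] at hc
      have hcast : (i.choose (t+u) : ℤ) * ((t+u).choose t)
          = (i.choose t : ℤ) * ((i-t).choose u) := by exact_mod_cast congrArg (Nat.cast (R := ℤ)) hc
      have hexp : i - (t + u) = (i - t) - u := by omega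
      rw [hexp, mul_assoc, hcast]
      ring
    rw [Finset.sum_congr rfl hterm, ← Finset.mul_sum, alt_sum]
    by_cases h : t = i
    · subst h; simp
    · have h2 : i - t ≠ 0 := by omega
      simp [h2, h]
  · rw [if_neg (by omega)]
    refine Finset.sum_eq_zero fun r hr => ?_
    simp only [mem_range] at hr
    have : r < t := by omega
    simp [Nat.choose_eq_zero_of_lt this]

private lemma diff_sum (k i m : ℕ) :
    ∑ r ∈ range (i+1), (-1:ℤ)^(i-r) * (i.choose r) * ((k+r).choose m)
      = gch k ((m:ℤ) - i) := by
  have hvand : ∀ r : ℕ, ((k+r).choose m : ℤ)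
      = ∑ s ∈ range (m+1), (k.choose s : ℤ) * (r.choose (m-s)) := by
    intro r
    rw [Nat.add_choose_eq, Finset.Nat.sum_antidiagonal_eq_sum_range_succ_mk]
    push_cast
    rfl
  calc ∑ r ∈ range (i+1), (-1:ℤ)^(i-r) * (i.choose r) * ((k+r).choose m)
      = ∑ r ∈ range (i+1), ∑ s ∈ range (m+1),
          (k.choose s : ℤ) * ((-1:ℤ)^(i-r) * (i.choose r) * (r.choose (m-s))) := by
        refine Finset.sum_congr rfl fun r _ => ?_
        rw [hvand r, Finset.mul_sum]
        refine Finset.sum_congr rfl fun s _ => ?_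
        ring
    _ = ∑ s ∈ range (m+1), (k.choose s : ℤ) *
          (∑ r ∈ range (i+1), (-1:ℤ)^(i-r) * (i.choose r) * (r.choose (m-s))) := by
        rw [Finset.sum_comm]
        refine Finset.sum_congr rfl fun s _ => ?_
        rw [Finset.mul_sum]
    _ = ∑ s ∈ range (m+1), (k.choose s : ℤ) * (if m - s = i then 1 else 0) := by
        refine Finset.sum_congr rfl fun s _ => ?_
        rw [delta_sum]
    _ = gch k ((m:ℤ) - i) := by
        by_cases him : i ≤ m
        · have hcond : ∀ s ∈ range (m+1), (k.choose s : ℤ) * (if m - s = i then 1 else 0)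
              = if s = m - i then (k.choose s : ℤ) else 0 := by
            intro s hs
            simp only [mem_range] at hs
            by_cases h : m - s = i
            · rw [if_pos h, if_pos (by omega), mul_one]
            · rw [if_neg h, if_neg (by omega), mul_zero]
          rw [Finset.sum_congr rfl hcond, Finset.sum_ite_eq' (range (m+1)) (m-i)
            (fun s => (k.choose s : ℤ)), if_pos (by simp only [mem_range]; omega)]
          unfold gch
          rw [if_pos (by omega)]
          have ht : ((m:ℤ) - i).toNat = m - i := by omega
          rw [ht]
        · rw [Finset.sum_eq_zero, gch, if_neg (by omega)]
          intro s hs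
          simp only [mem_range] at hs
          rw [if_neg (by omega), mul_zero]

private lemma det_reduce (n k : ℕ) (m : Fin n → ℕ) :
    Matrix.det (Matrix.of fun i j : Fin n => (((k + (i:ℕ)).choose (m j)) : ℤ))
      = Matrix.det (Matrix.of fun i j : Fin n => gch k ((m j : ℤ) - (i:ℕ))) := by
  set A : Matrix (Fin n) (Fin n) ℤ :=
    Matrix.of fun i j : Fin n => (((k + (i:ℕ)).choose (m j)) : ℤ) with hA
  set L : Matrix (Fin n) (Fin n) ℤ :=
    Matrix.of fun i r : Fin n => (-1:ℤ)^((i:ℕ)-(r:ℕ)) * ((i:ℕ).choose (r:ℕ)) with hLdef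
  have hL : L.BlockTriangular OrderDual.toDual := by
    intro i r h
    have : (i:ℕ) < (r:ℕ) := h
    simp [hLdef, Nat.choose_eq_zero_of_lt this]
  have hdetL : L.det = 1 := by
    rw [Matrix.det_of_lowerTriangular L hL]
    refine Finset.prod_eq_one fun i _ => ?_
    simp [hLdef]
  have hmul : L * A = Matrix.of fun i j : Fin n => gch k ((m j : ℤ) - (i:ℕ)) := by
    ext i j
    rw [Matrix.mul_apply]
    have hstep : ∑ r : Fin n, L i r * A r j
        = ∑ r ∈ range n, (-1:ℤ)^((i:ℕ)-r) * ((i:ℕ).choose r) * ((k+r).choose (m j)) := by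
      rw [← Fin.sum_univ_eq_sum_range (fun r => (-1:ℤ)^((i:ℕ)-r) * ((i:ℕ).choose r) * ((k+r).choose (m j))) n]
      refine Finset.sum_congr rfl fun r _ => ?_
      simp [hLdef, hA, mul_assoc]
    have hsub : ∑ r ∈ range n, (-1:ℤ)^((i:ℕ)-r) * ((i:ℕ).choose r) * ((k+r).choose (m j))
        = ∑ r ∈ range ((i:ℕ)+1), (-1:ℤ)^((i:ℕ)-r) * ((i:ℕ).choose r) * ((k+r).choose (m j)) := by
      refine (Finset.sum_subset (fun r hr => ?_) (fun r hr hr' => ?_)).symm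
      · simp only [mem_range] at *; omega
      · simp only [mem_range] at hr hr'
        have : (i:ℕ) < r := by omega
        simp [Nat.choose_eq_zero_of_lt this]
    rw [hstep, hsub, diff_sum]
    rfl
  calc A.det = (L * A).det := by rw [Matrix.det_mul, hdetL, one_mul]
    _ = _ := by rw [hmul]


/-- For a partition `λ` inside an `n × k` rectangle (`l i = λ_{i+1}`, `0`-indexed),
with complement `λ̄_i = k - λ_{n+1-i}` (so that `λ̄_{n-j} = k - λ_{j+1} = k - l j`),
the multiplicity determinants of `λ` and `λ̄` agree:
`det[ C(k+i, j+λ_{n-j}) ] = det[ C(k+i, j+λ̄_{n-j}) ]`. -/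
theorem stmt2 (n k : ℕ) (l : Fin n → ℕ)
    (hl : ∀ i j : Fin n, i ≤ j → l j ≤ l i) (hbd : ∀ i, l i ≤ k) :
    Matrix.det (Matrix.of fun i j : Fin n =>
        (((k + (i : ℕ)).choose ((j : ℕ) + l j.rev)) : ℤ))
      = Matrix.det (Matrix.of fun i j : Fin n =>
        (((k + (i : ℕ)).choose ((j : ℕ) + (k - l j))) : ℤ)) := by
  rw [det_reduce n k (fun j => (j:ℕ) + l j.rev), det_reduce n k (fun j => (j:ℕ) + (k - l j))]
  have key : (Matrix.of fun i j : Fin n =>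
        gch k (((((j:ℕ) + l j.rev : ℕ) : ℤ)) - (i:ℕ))).submatrix Fin.revPerm Fin.revPerm
      = Matrix.of fun i j : Fin n => gch k (((((j:ℕ) + (k - l j) : ℕ) : ℤ)) - (i:ℕ)) := by
    ext i j
    simp only [Matrix.submatrix_apply, Matrix.of_apply, Fin.revPerm_apply, Fin.rev_rev]
    rw [gch_symm k (((((j:ℕ) + (k - l j) : ℕ) : ℤ)) - (i:ℕ))]
    congr 1
    have h1 : (i.rev : ℕ) = n - ((i:ℕ) + 1) := Fin.val_rev i
    have h2 : (j.rev : ℕ) = n - ((j:ℕ) + 1) := Fin.val_rev j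
    have h3 := hbd j
    have h4 : (i:ℕ) < n := i.isLt
    have h5 : (j:ℕ) < n := j.isLt
    omega
  rw [← Matrix.det_submatrix_equiv_self Fin.revPerm
    (Matrix.of fun i j : Fin n => gch k (((((j:ℕ) + l j.rev : ℕ) : ℤ)) - (i:ℕ))), key]
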